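/- arXiv:2309.02793 — 4 statements merged into one kernel-verified Lean document; each statement's English description precedes it below -/
import Mathlib

section
/- For any natural numbers δ and k' with k' ≤ C(δ,2), the quantity ∑_{i=2}^{min(δ, k'+1)} (δ - i) is at most C(δ,3) - C(r,3) - C(t,2), where r, t are the unique nonnegative integers with 0 ≤ t < r and C(δ,2) - k' = C(r,2) + t. -/
lemma choose_two_succ (n : ℕ) : (n+1).choose 2 = n.choose 2 + n := by
  rw [Nat.choose_succ_succ, Nat.choose_one_right]; norm_num; omega

lemma choose_three_succ (n : ℕ) : (n+1).choose 3 = n.choose 3 + n.choose 2 := by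
  rw [Nat.choose_succ_succ]; norm_num; omega

lemma aux_bound (δ : ℕ) : ∀ k' r t, t < r → δ.choose 2 = r.choose 2 + t + k' →
    (∑ i ∈ Finset.Icc 2 (min δ (k' + 1)), (δ - i)) + (r.choose 3 + t.choose 2)
      ≤ δ.choose 3 := by
  intro k'
  induction k' with
  | zero =>
    intro r t htr h
    have hS : Finset.Icc 2 (min δ 1) = ∅ := by
      apply Finset.Icc_eq_empty; omega
    rw [hS, Finset.sum_empty]
    rcases le_or_gt r δ with hle | hlt
    · rcases eq_or_lt_of_le hle with heq | hlt2
      · subst heq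
        have ht0 : t = 0 := by omega
        subst ht0; simp
      · exfalso
        have h1 : (r+1).choose 2 ≤ δ.choose 2 := Nat.choose_le_choose 2 hlt2
        rw [choose_two_succ] at h1
        omega
    · have h1 : (δ+1).choose 2 ≤ r.choose 2 := Nat.choose_le_choose 2 hlt
      rw [choose_two_succ] at h1
      have hδ0 : δ = 0 := by omega
      subst hδ0
      have h0 : (0:ℕ).choose 2 = 0 := rfl
      have hr2 : r.choose 2 = 0 := by omega
      have ht0 : t = 0 := by omega
      have hr1 : r = 1 := by
        by_contra hc
        have h2 : (2:ℕ).choose 2 ≤ r.choose 2 := Nat.choose_le_choose 2 (by omega)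
        have h3 : (2:ℕ).choose 2 = 1 := rfl
        omega
      subst hr1; subst ht0; decide
  | succ k ih =>
    intro r t htr h
    obtain ⟨r', t', ht'r', h', hval⟩ :
        ∃ r' t', t' < r' ∧ δ.choose 2 = r'.choose 2 + t' + k ∧
          r'.choose 3 + t'.choose 2 = r.choose 3 + t.choose 2 + t := by
      rcases lt_or_eq_of_le (Nat.succ_le_of_lt htr) with hlt | heq
      · refine ⟨r, t+1, hlt, by omega, ?_⟩
        rw [choose_two_succ t]; omega
      · refine ⟨r+1, 0, by omega, ?_, ?_⟩
        · rw [choose_two_succ r]; omega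
        · rw [choose_three_succ r, ← heq, choose_two_succ t]; simp; omega
    have hIH := ih r' t' ht'r' h'
    have hsum : (∑ i ∈ Finset.Icc 2 (min δ (k + 1 + 1)), (δ - i))
        ≤ (∑ i ∈ Finset.Icc 2 (min δ (k + 1)), (δ - i)) + t := by
      rcases le_or_gt δ (k+1) with hle | hlt
      · have hm : min δ (k+1+1) = min δ (k+1) := by omega
        rw [hm]; omega
      · have h2 : min δ (k+1+1) = (k+1)+1 := by omega
        have h3 : min δ (k+1) = k+1 := by omega
        rw [h2, h3, Finset.sum_Icc_succ_top (by omega)]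
        have hrδ : r < δ := by
          by_contra hc
          have hcc := Nat.choose_le_choose 2 (not_lt.mp hc)
          omega
        obtain ⟨d, rfl⟩ : ∃ d, δ = d + 1 := ⟨δ-1, by omega⟩
        have h4 : r.choose 2 ≤ d.choose 2 := Nat.choose_le_choose 2 (by omega)
        have h5 := choose_two_succ d
        omega
    omega

theorem stmt_6 (δ k' r t : ℕ) (hk : k' ≤ δ.choose 2)
    (ht : t < r) (h : δ.choose 2 - k' = r.choose 2 + t) :
    ∑ i ∈ Finset.Icc 2 (min δ (k' + 1)), (δ - i)
      ≤ δ.choose 3 - r.choose 3 - t.choose 2 := by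
  have hmain := aux_bound δ k' r t ht (by omega)
  omega
end

section
/- Let G be a simple graph on a finite vertex set with exactly n edges, and let r, t be nonnegative integers with 0 ≤ t < r and n = C(r,2) + t. Then the number of triangles in G is at most C(r,3) + C(t,2). -/
open Finset SimpleGraph
open scoped FinsetFamily

set_option maxHeartbeats 1000000

theorem stmt_9 {V : Type*} [Fintype V] [DecidableEq V]
    (G : SimpleGraph V) [DecidableRel G.Adj] (n r t : ℕ)
    (hn : G.edgeFinset.card = n) (ht : t < r) (hrt : n = r.choose 2 + t) :
    (G.cliqueFinset 3).card ≤ r.choose 3 + t.choose 2 := by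
  by_contra hc
  push_neg at hc
  -- extract a triangle to get n ≥ 3
  obtain ⟨s₀, hs₀⟩ : (G.cliqueFinset 3).Nonempty := card_pos.1 (by omega)
  rw [mem_cliqueFinset_iff, is3Clique_iff] at hs₀
  obtain ⟨a, b, c, hab, hac, hbc, rfl⟩ := hs₀
  have hn3 : 3 ≤ n := by
    rw [← hn]
    have hsub : {s(a,b), s(a,c), s(b,c)} ⊆ G.edgeFinset := by
      intro x hx
      simp only [mem_insert, mem_singleton] at hx
      rcases hx with rfl|rfl|rfl <;> simpa [mem_edgeFinset]
    refine le_trans (le_of_eq ?_) (card_le_card hsub)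
    rw [card_insert_of_notMem, card_insert_of_notMem, card_singleton]
    · simp [Sym2.eq_iff, hab.ne, hbc.ne, hbc.ne']
    · simp [Sym2.eq_iff, hab.ne, hac.ne, hbc.ne, hab.ne', hac.ne', hbc.ne']
  have hr3 : 3 ≤ r := by
    by_contra h
    push_neg at h
    interval_cases r <;> simp_all [Nat.choose] <;> omega
  set m := max t 1 with hm
  have hmr : m < r := by omega
  have hmc : m.choose 2 = t.choose 2 := by
    rcases Nat.eq_zero_or_pos t with h|h
    · have hm1 : m = 1 := by omega
      rw [hm1, h]; rfl
    · have hm1 : m = t := by omega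
      rw [hm1]
  set N := Fintype.card V + r + 1 with hN
  have hrN : r < N := by omega
  have h0N : 0 < N := by omega
  have hmN : m < N := by omega
  have hVN : Fintype.card V ≤ N := by omega
  let e : V ↪ Fin N := (Fintype.equivFin V).toEmbedding.trans (Fin.castLEEmb hVN)
  set 𝒜 : Finset (Finset (Fin N)) := (G.cliqueFinset 3).image (fun u => u.map e) with h𝒜
  have h𝒜card : #𝒜 = #(G.cliqueFinset 3) := card_image_of_injective _ (Finset.map_injective e)
  have h𝒜sized : (𝒜 : Set (Finset (Fin N))).Sized 3 := by
    intro A hA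
    simp only [h𝒜, coe_image, Set.mem_image, mem_coe] at hA
    obtain ⟨u, hu, rfl⟩ := hA
    rw [card_map]
    exact (SimpleGraph.mem_cliqueFinset_iff.1 hu).2
  have hshadow𝒜 : #(∂ 𝒜) ≤ n := by
    rw [← hn]
    set f : Sym2 V → Finset (Fin N) :=
      Sym2.lift ⟨fun x y => ({e x, e y} : Finset (Fin N)), fun x y => Finset.pair_comm _ _⟩ with hf
    have hsub : ∂ 𝒜 ⊆ G.edgeFinset.image f := by
      intro B hB
      obtain ⟨A, hA, v', hv', rfl⟩ := mem_shadow_iff.1 hB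
      simp only [h𝒜, mem_image] at hA
      obtain ⟨u, hu, rfl⟩ := hA
      obtain ⟨v, hv, rfl⟩ := Finset.mem_map.1 hv'
      rw [← Finset.map_erase]
      have hu' := SimpleGraph.mem_cliqueFinset_iff.1 hu
      have hcard2 : #(u.erase v) = 2 := by rw [card_erase_of_mem hv, hu'.2]
      obtain ⟨x, y, hxy, hxyeq⟩ := card_eq_two.1 hcard2
      have hxu : x ∈ u := (erase_subset _ _) (hxyeq ▸ mem_insert_self _ _)
      have hyu : y ∈ u := (erase_subset _ _) (hxyeq ▸ mem_insert_of_mem (mem_singleton_self _))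
      have hadj : G.Adj x y := hu'.1 hxu hyu hxy
      refine mem_image.2 ⟨s(x, y), mem_edgeFinset.2 hadj, ?_⟩
      rw [hxyeq, hf]
      simp [Finset.map_insert]
    exact (card_le_card hsub).trans card_image_le
  -- the ambient points
  set z0 : Fin N := ⟨0, h0N⟩ with hz0
  set zm : Fin N := ⟨m, hmN⟩ with hzm
  set zr : Fin N := ⟨r, hrN⟩ with hzr
  have hz0v : z0.val = 0 := rfl
  have hzmv : zm.val = m := rfl
  have hzrv : zr.val = r := rfl
  have hz0m : z0 ≠ zm := by simp only [hz0, hzm, ne_eq, Fin.mk.injEq]; omega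
  have hz0r : z0 ≠ zr := by simp only [hz0, hzr, ne_eq, Fin.mk.injEq]; omega
  have hzmr : zm ≠ zr := by simp only [hzm, hzr, ne_eq, Fin.mk.injEq]; omega
  set X : Finset (Fin N) := {z0, zm, zr} with hX
  have hXcard : #X = 3 := card_eq_three.2 ⟨z0, zm, zr, hz0m, hz0r, hzmr, rfl⟩
  set 𝒞 := Colex.initSeg X with h𝒞
  have h𝒞init : Colex.IsInitSeg 𝒞 3 := hXcard ▸ Colex.isInitSeg_initSeg
  have hrange_r : ∀ x ∈ range r, x < N := fun x hx => by rw [mem_range] at hx; omega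
  have hrange_m : ∀ x ∈ range m, x < N := fun x hx => by rw [mem_range] at hx; omega
  set R : Finset (Fin N) := attachFin (range r) hrange_r with hR
  set T : Finset (Fin N) := attachFin (range m) hrange_m with hT
  have hXerase : X.erase zr = {z0, zm} := by
    rw [hX, erase_insert_of_ne hz0r, erase_insert_of_ne hzmr, erase_singleton, LawfulSingleton.insert_empty_eq]
  -- (a) upper bound on #𝒞
  have h𝒞sub : 𝒞 ⊆ powersetCard 3 R ∪ ((powersetCard 2 T).image (fun q => insert zr q) ∪ {X}) := by
    intro A hA
    rw [h𝒞, Colex.mem_initSeg, hXcard] at hA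
    obtain ⟨hA3, hAle⟩ := hA
    by_cases hzrA : zr ∈ A
    · have hq : toColex (A.erase zr) ≤ toColex ({z0, zm} : Finset (Fin N)) := by
        have h1 : ({zr} : Finset (Fin N)) ⊆ A := singleton_subset_iff.2 hzrA
        have h2 : ({zr} : Finset (Fin N)) ⊆ X := by simp [hX]
        have h3 := (Colex.toColex_sdiff_le_toColex_sdiff h1 h2).2 hAle
        rwa [sdiff_singleton_eq_erase, sdiff_singleton_eq_erase, hXerase] at h3
      by_cases hzmA : zm ∈ A.erase zr
      · -- A = X
        have h1 : ({zm} : Finset (Fin N)) ⊆ A.erase zr := singleton_subset_iff.2 hzmA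
        have h2 : ({zm} : Finset (Fin N)) ⊆ {z0, zm} := by simp
        have hq2 := (Colex.toColex_sdiff_le_toColex_sdiff h1 h2).2 hq
        rw [sdiff_singleton_eq_erase, sdiff_singleton_eq_erase,
          erase_insert_of_ne hz0m, erase_singleton, LawfulSingleton.insert_empty_eq] at hq2
        have hcard1 : #((A.erase zr).erase zm) = 1 := by
          rw [card_erase_of_mem hzmA, card_erase_of_mem hzrA, ← hA3]
        obtain ⟨d, hd⟩ := card_eq_one.1 hcard1
        have hd0 : d = z0 := by
          have h4 := (Colex.toColex_le_singleton.1 (hd ▸ hq2)) d (mem_singleton_self d)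
          exact le_antisymm h4.1 (by simp [hz0, Fin.le_def])
        have hA' : A = X := by
          rw [← insert_erase hzrA, ← insert_erase hzmA, hd, hd0, hX]
          ext x
          simp only [mem_insert, mem_singleton]
          tauto
        exact mem_union_right _ (mem_union_right _ (mem_singleton.2 hA'))
      · have hsubT : A.erase zr ⊆ T := by
          intro x hx
          have hxle : x ≤ zm := Colex.forall_le_mono hq
            (by
              intro w hw
              simp only [mem_insert, mem_singleton] at hw
              rcases hw with rfl|rfl
              · simp [hz0, hzm, Fin.le_def]
              · exact le_rfl) x hx
          rw [hT, mem_attachFin, mem_range]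
          have hne : x ≠ zm := ne_of_mem_of_not_mem hx hzmA
          have h5 : x.val ≤ m := hxle
          have h6 : x.val ≠ m := fun h => hne (Fin.ext (by rw [h, hzm]))
          omega
        have hcard2 : #(A.erase zr) = 2 := by rw [card_erase_of_mem hzrA, ← hA3]
        exact mem_union_right _ (mem_union_left _ (mem_image.2
          ⟨A.erase zr, mem_powersetCard.2 ⟨hsubT, hcard2⟩, insert_erase hzrA⟩))
    · have hsubR : A ⊆ R := by
        intro x hx
        have hxle : x ≤ zr := Colex.forall_le_mono hAle
          (by
            intro w hw
            simp only [hX, mem_insert, mem_singleton] at hw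
            rcases hw with rfl|rfl|rfl
            · simp [hz0, hzr, Fin.le_def]
            · simp [hzm, hzr, Fin.le_def]; omega
            · exact le_rfl) x hx
        rw [hR, mem_attachFin, mem_range]
        have hne : x ≠ zr := ne_of_mem_of_not_mem hx hzrA
        have h5 : x.val ≤ r := hxle
        have h6 : x.val ≠ r := fun h => hne (Fin.ext (by rw [h, hzr]))
        omega
      exact mem_union_left _ (mem_powersetCard.2 ⟨hsubR, hA3.symm⟩)
  have h𝒞card : #𝒞 ≤ r.choose 3 + t.choose 2 + 1 := by
    refine (card_le_card h𝒞sub).trans ((card_union_le _ _).trans ?_)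
    have h1 : #(powersetCard 3 R) = r.choose 3 := by
      rw [card_powersetCard, hR, card_attachFin, card_range]
    have h2 : #((powersetCard 2 T).image (fun q => insert zr q)) ≤ t.choose 2 := by
      refine card_image_le.trans ?_
      rw [card_powersetCard, hT, card_attachFin, card_range, hmc]
    have h3 := card_union_le ((powersetCard 2 T).image (fun q => insert zr q)) ({X} : Finset (Finset (Fin N)))
    simp only [card_singleton] at h3
    omega
  -- (b) lower bound on #(∂ 𝒞)
  have hzrR : zr ∉ R := by
    rw [hR, mem_attachFin, mem_range, hzr]
    omega
  set D : Finset (Finset (Fin N)) :=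
    powersetCard 2 R ∪ (T ∪ {zm}).image (fun x => ({x, zr} : Finset (Fin N))) with hD
  have hmemX : z0 ∈ X ∧ zm ∈ X ∧ zr ∈ X := by
    refine ⟨?_, ?_, ?_⟩ <;> simp [hX]
  have hDsub : D ⊆ ∂ 𝒞 := by
    intro B hB
    rw [hD, mem_union] at hB
    rcases hB with hB | hB
    · rw [mem_powersetCard] at hB
      obtain ⟨hBR, hB2⟩ := hB
      have hcardlt : #B < #R := by
        rw [hB2, hR, card_attachFin, card_range]; omega
      obtain ⟨x, hxR, hxB⟩ := (ssubset_iff_of_subset hBR).1 (hBR.ssubset_of_ne (by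
        intro h; rw [h] at hcardlt; omega))
      rw [mem_shadow_iff_insert_mem]
      refine ⟨x, hxB, ?_⟩
      rw [h𝒞, Colex.mem_initSeg, hXcard]
      have hinsR : insert x B ⊆ R := insert_subset hxR hBR
      constructor
      · rw [card_insert_of_notMem hxB, hB2]
      · refine le_of_lt (Colex.toColex_lt_toColex_iff_exists_forall_lt.2 ⟨zr, hmemX.2.2, ?_, ?_⟩)
        · intro hzr'
          exact hzrR (hinsR hzr')
        · intro w hw _
          have hwR := hinsR hw
          rw [hR, mem_attachFin, mem_range] at hwR
          rw [Fin.lt_def, hzr]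
          exact hwR
    · obtain ⟨x, hx, rfl⟩ := mem_image.1 hB
      have hxval : x.val ≤ m := by
        rw [mem_union, mem_singleton] at hx
        rcases hx with hx | rfl
        · rw [hT, mem_attachFin, mem_range] at hx; omega
        · omega
      have hxzr : x ≠ zr := by
        intro h
        have := congrArg Fin.val h
        omega
      rw [mem_shadow_iff_insert_mem]
      by_cases hx0 : x = z0
      · refine ⟨zm, ?_, ?_⟩
        · simp only [mem_insert, mem_singleton, hx0]
          push_neg
          exact ⟨hz0m.symm, hzmr⟩
        · have hins : insert zm ({x, zr} : Finset (Fin N)) = X := by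
            rw [hx0, hX]
            ext w
            simp only [mem_insert, mem_singleton]
            tauto
          rw [hins, h𝒞]
          exact Colex.mem_initSeg_self
      by_cases hxm : x = zm
      · refine ⟨z0, ?_, ?_⟩
        · simp only [mem_insert, mem_singleton, hxm]
          push_neg
          exact ⟨hz0m, hz0r⟩
        · have hins : insert z0 ({x, zr} : Finset (Fin N)) = X := by
            rw [hxm, hX]
          rw [hins, h𝒞]
          exact Colex.mem_initSeg_self
      · -- here x ∈ T with 0 < x.val < m
        have hxT : x.val < m := by
          rw [mem_union, mem_singleton] at hx
          rcases hx with hx | rfl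
          · rw [hT, mem_attachFin, mem_range] at hx; exact hx
          · exact absurd rfl hxm
        refine ⟨z0, ?_, ?_⟩
        · simp only [mem_insert, mem_singleton]
          push_neg
          exact ⟨fun h => hx0 h.symm, hz0r⟩
        · rw [h𝒞, Colex.mem_initSeg, hXcard]
          constructor
          · rw [card_insert_of_notMem, card_insert_of_notMem, card_singleton]
            · simp only [mem_singleton]; exact hxzr
            · simp only [mem_insert, mem_singleton]
              push_neg
              exact ⟨fun h => hx0 h.symm, hz0r⟩
          · refine le_of_lt (Colex.toColex_lt_toColex_iff_exists_forall_lt.2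
              ⟨zm, hmemX.2.1, ?_, ?_⟩)
            · simp only [mem_insert, mem_singleton]
              push_neg
              exact ⟨hz0m.symm, fun h => hxm h.symm, hzmr⟩
            · intro w hw hwX
              simp only [mem_insert, mem_singleton] at hw
              rcases hw with rfl | rfl | rfl
              · exact absurd hmemX.1 hwX
              · rw [Fin.lt_def, hzm]
                exact hxT
              · exact absurd hmemX.2.2 hwX
  have hDcard : #D = r.choose 2 + (m + 1) := by
    have hdisj : Disjoint (powersetCard 2 R) ((T ∪ {zm}).image (fun x => ({x, zr} : Finset (Fin N)))) := by
      rw [Finset.disjoint_left]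
      intro B hB1 hB2
      obtain ⟨x, hx, rfl⟩ := mem_image.1 hB2
      rw [mem_powersetCard] at hB1
      exact hzrR (hB1.1 (mem_insert_of_mem (mem_singleton_self _)))
    have hinj : Set.InjOn (fun x => ({x, zr} : Finset (Fin N))) (T ∪ {zm} : Finset (Fin N)) := by
      intro x hx y hy hxy
      have hxv : x.val ≤ m := by
        rw [mem_coe, mem_union, mem_singleton] at hx
        rcases hx with hx | rfl
        · rw [hT, mem_attachFin, mem_range] at hx; omega
        · omega
      have hxzr : x ≠ zr := by
        intro h
        have := congrArg Fin.val h
        omega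
      have hxmem : x ∈ ({y, zr} : Finset (Fin N)) := by
        rw [show ({y, zr} : Finset (Fin N)) = {x, zr} from hxy.symm]
        exact mem_insert_self _ _
      rw [mem_insert, mem_singleton] at hxmem
      rcases hxmem with h | h
      · exact h
      · exact absurd h hxzr
    have hzmT : zm ∉ T := by
      rw [hT, mem_attachFin, mem_range, hzm]
      omega
    rw [hD, card_union_of_disjoint hdisj, card_powersetCard, hR, card_attachFin, card_range,
      card_image_of_injOn hinj, union_comm, ← insert_eq, card_insert_of_notMem hzmT,
      hT, card_attachFin, card_range]
  -- apply Kruskal–Katona and conclude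
  have hKK : #(∂ 𝒞) ≤ #(∂ 𝒜) := by
    have hle : #𝒞 ≤ #𝒜 := by
      calc #𝒞 ≤ r.choose 3 + t.choose 2 + 1 := h𝒞card
        _ ≤ #(G.cliqueFinset 3) := hc
        _ = #𝒜 := h𝒜card.symm
    have h := Finset.kruskal_katona h𝒜sized hle h𝒞init
    convert h using 4 <;> exact Subsingleton.elim _ _
  have hfinal : n + 1 ≤ #(∂ 𝒞) := by
    have h1 := card_le_card hDsub
    rw [hDcard] at h1
    omega
  omega
end

section
/- Let G be a finite p-group with G/Z(G) minimally generated by δ elements, nilpotency class c, and |γ₂G| = p^k, where γ₂G is the commutator subgroup. Then ∏_{i=2}^{c} |γ_iG/γ_{i+1}G ⊗ (G/Z(G)γ₂G)| ≤ p^{kδ}. -/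
set_option maxHeartbeats 1000000

/-- If `M` is a finite abelian group and `N` is an abelian group spanned (as `ℤ`-module)
by a finite set of at most `δ` elements, then `|M ⊗ N| ≤ |M| ^ δ`. -/
lemma aux_card_tensor_le {M N : Type*} [AddCommGroup M] [AddCommGroup N] [Finite M]
    {δ : ℕ} (S : Finset N) (hScard : S.card ≤ δ)
    (hspan : Submodule.span ℤ (S : Set N) = ⊤) :
    Nat.card (TensorProduct ℤ M N) ≤ Nat.card M ^ δ := by
  classical
  set v : ↥S → N := Subtype.val with hv
  have hπ : Function.Surjective (Fintype.linearCombination ℤ v) := by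
    rw [← LinearMap.range_eq_top, Fintype.range_linearCombination]
    rw [eq_top_iff, ← hspan]
    refine Submodule.span_mono ?_
    intro x hx
    exact ⟨⟨x, hx⟩, rfl⟩
  have hsurj := LinearMap.lTensor_surjective M hπ
  have e := TensorProduct.piScalarRight ℤ ℤ M ↥S
  have hfin : Finite (TensorProduct ℤ M (↥S → ℤ)) := Finite.of_equiv _ e.symm.toEquiv
  calc Nat.card (TensorProduct ℤ M N)
      ≤ Nat.card (TensorProduct ℤ M (↥S → ℤ)) :=
        Nat.card_le_card_of_surjective _ hsurj
    _ = Nat.card (↥S → M) := Nat.card_congr e.toEquiv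
    _ = Nat.card M ^ S.card := by
        rw [Nat.card_fun]
        congr 1
        simp [Nat.card_eq_fintype_card]
    _ ≤ Nat.card M ^ δ := Nat.pow_le_pow_right Nat.card_pos hScard

/-- A multiplicative generating set of a commutative group gives a `ℤ`-module spanning set
of the corresponding additive group. -/
lemma aux_span {H : Type*} [CommGroup H] {s : Set H} (hs : Subgroup.closure s = ⊤) :
    Submodule.span ℤ (Additive.ofMul '' s) = ⊤ := by
  have h1 : AddSubgroup.closure (Additive.ofMul '' s) = ⊤ := by
    rw [eq_top_iff]
    intro x _
    have hx : Additive.toMul x ∈ Subgroup.closure s := hs ▸ Subgroup.mem_top _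
    refine Subgroup.closure_induction
      (p := fun a _ => Additive.ofMul a ∈ AddSubgroup.closure (Additive.ofMul '' s))
      (fun a ha => AddSubgroup.subset_closure (Set.mem_image_of_mem _ ha))
      (AddSubgroup.zero_mem _)
      (fun a b _ _ ha hb => AddSubgroup.add_mem _ ha hb)
      (fun a _ ha => AddSubgroup.neg_mem _ ha) hx
  rw [eq_top_iff]
  intro x _
  have hx : x ∈ AddSubgroup.closure (Additive.ofMul '' s) := h1 ▸ AddSubgroup.mem_top x
  rw [← Submodule.span_int_eq_addSubgroupClosure] at hx
  exact hx

/-- Telescoping product of the orders of the lower central series factors. -/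
lemma aux_prod (G : Type*) [Group G] [Finite G] (n : ℕ) :
    (∏ i ∈ Finset.Icc 2 (n + 1),
      Nat.card (((⊤ : Subgroup G).lowerCentralSeries (i - 1)) ⧸
        (((⊤ : Subgroup G).lowerCentralSeries i).subgroupOf ((⊤ : Subgroup G).lowerCentralSeries (i - 1)))))
      * Nat.card ((⊤ : Subgroup G).lowerCentralSeries (n + 1)) = Nat.card ((⊤ : Subgroup G).lowerCentralSeries 1) := by
  induction n with
  | zero => simp
  | succ n ih =>
    rw [Finset.prod_Icc_succ_top (by omega)]
    have hle : (⊤ : Subgroup G).lowerCentralSeries (n + 2) ≤ (⊤ : Subgroup G).lowerCentralSeries (n + 1) :=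
      Subgroup.lowerCentralSeries_antitone _ (by omega)
    have hcard : Nat.card (((⊤ : Subgroup G).lowerCentralSeries (n + 2)).subgroupOf ((⊤ : Subgroup G).lowerCentralSeries (n + 1)))
        = Nat.card ((⊤ : Subgroup G).lowerCentralSeries (n + 2)) :=
      Nat.card_congr (Subgroup.subgroupOfEquivOfLe hle).toEquiv
    have key := Subgroup.card_eq_card_quotient_mul_card_subgroup
      (((⊤ : Subgroup G).lowerCentralSeries (n + 2)).subgroupOf ((⊤ : Subgroup G).lowerCentralSeries (n + 1)))
    rw [hcard] at key
    have h1 : n + 2 - 1 = n + 1 := rfl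
    rw [h1, mul_assoc, ← key, ih]

/-- For a finite `p`-group `G` of nilpotency class `c`, with `d(G/Z(G)) = δ` and
`|γ₂G| = p ^ k`, we have `∏_{i=2}^{c} |γᵢG/γᵢ₊₁G ⊗ Ḡ^{ab}| ≤ p ^ (k * δ)`,
where `Ḡ^{ab}` is the abelianization of `Ḡ = G/Z(G)`.
(Here `γᵢG = (⊤ : Subgroup G).lowerCentralSeries (i-1)`, so `γ₂G` is the commutator subgroup;
each quotient `γᵢG/γᵢ₊₁G` is abelian, so tensoring with its abelianization is the
tensor product of abelian groups from the paper.) -/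
theorem stmt_13 {G : Type*} [Group G] [Finite G] (p : ℕ) (hp : p.Prime)
    (hpG : IsPGroup p G) [Group.IsNilpotent G] (δ k : ℕ)
    (hδ : Group.rank (G ⧸ Subgroup.center G) = δ)
    (hk : Nat.card ((⊤ : Subgroup G).lowerCentralSeries 1) = p ^ k) :
    ∏ i ∈ Finset.Icc 2 (Group.nilpotencyClass G),
      Nat.card (TensorProduct ℤ
        (Additive (Abelianization
          (((⊤ : Subgroup G).lowerCentralSeries (i - 1)) ⧸
            (((⊤ : Subgroup G).lowerCentralSeries i).subgroupOf ((⊤ : Subgroup G).lowerCentralSeries (i - 1))))))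
        (Additive (Abelianization (G ⧸ Subgroup.center G))))
      ≤ p ^ (k * δ) := by
  classical
  obtain ⟨S, hScard, hSclosure⟩ := Group.rank_spec (G ⧸ Subgroup.center G)
  set N := Additive (Abelianization (G ⧸ Subgroup.center G)) with hN
  set T : Finset N := S.image (fun g => Additive.ofMul (Abelianization.of g)) with hT
  have hTcard : T.card ≤ δ := by
    calc T.card ≤ S.card := Finset.card_image_le
    _ = δ := by rw [hScard, hδ]
  have hofsurj : Function.Surjective (Abelianization.of (G := G ⧸ Subgroup.center G)) :=
    fun x => QuotientGroup.induction_on x fun g => ⟨g, rfl⟩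
  have hclo : Subgroup.closure
      ((Abelianization.of (G := G ⧸ Subgroup.center G)) '' (S : Set _)) = ⊤ := by
    rw [← MonoidHom.map_closure, hSclosure]
    exact Subgroup.map_top_of_surjective _ hofsurj
  have hspan : Submodule.span ℤ (T : Set N) = ⊤ := by
    have h := aux_span hclo
    rw [hT, Finset.coe_image]
    rw [show ((fun g => Additive.ofMul (Abelianization.of g)) '' (S : Set _))
        = Additive.ofMul '' ((Abelianization.of (G := G ⧸ Subgroup.center G)) '' (S : Set _))
      from (Set.image_image _ _ _).symm]
    exact h
  have hterm : ∀ i : ℕ,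
      Nat.card (TensorProduct ℤ
        (Additive (Abelianization
          (((⊤ : Subgroup G).lowerCentralSeries (i - 1)) ⧸
            (((⊤ : Subgroup G).lowerCentralSeries i).subgroupOf ((⊤ : Subgroup G).lowerCentralSeries (i - 1)))))) N)
      ≤ Nat.card (((⊤ : Subgroup G).lowerCentralSeries (i - 1)) ⧸
            (((⊤ : Subgroup G).lowerCentralSeries i).subgroupOf ((⊤ : Subgroup G).lowerCentralSeries (i - 1)))) ^ δ := by
    intro i
    set Q := ((⊤ : Subgroup G).lowerCentralSeries (i - 1)) ⧸
        (((⊤ : Subgroup G).lowerCentralSeries i).subgroupOf ((⊤ : Subgroup G).lowerCentralSeries (i - 1))) with hQ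
    have h1 : Nat.card (TensorProduct ℤ (Additive (Abelianization Q)) N)
        ≤ Nat.card (Additive (Abelianization Q)) ^ δ := aux_card_tensor_le T hTcard hspan
    have heq : Nat.card (Additive (Abelianization Q)) = Nat.card (Abelianization Q) :=
      Nat.card_congr Additive.toMul
    have h2 : Nat.card (Abelianization Q) ≤ Nat.card Q :=
      Nat.card_le_card_of_surjective (Abelianization.of (G := Q))
        (fun x => QuotientGroup.induction_on x fun g => ⟨g, rfl⟩)
    calc Nat.card (TensorProduct ℤ (Additive (Abelianization Q)) N)
        ≤ Nat.card (Additive (Abelianization Q)) ^ δ := h1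
      _ = Nat.card (Abelianization Q) ^ δ := by rw [heq]
      _ ≤ Nat.card Q ^ δ := Nat.pow_le_pow_left h2 δ
  have hprod : (∏ i ∈ Finset.Icc 2 (Group.nilpotencyClass G),
      Nat.card (((⊤ : Subgroup G).lowerCentralSeries (i - 1)) ⧸
        (((⊤ : Subgroup G).lowerCentralSeries i).subgroupOf ((⊤ : Subgroup G).lowerCentralSeries (i - 1))))) ≤ p ^ k := by
    rcases Nat.eq_zero_or_pos (Group.nilpotencyClass G) with h0 | hpos
    · rw [h0, show Finset.Icc 2 0 = ∅ from rfl, Finset.prod_empty]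
      exact Nat.one_le_pow _ _ hp.pos
    · obtain ⟨n, hn⟩ : ∃ n, Group.nilpotencyClass G = n + 1 :=
        ⟨Group.nilpotencyClass G - 1, by omega⟩
      have hbot : (⊤ : Subgroup G).lowerCentralSeries (n + 1) = ⊥ := by
        rw [← hn]; exact lowerCentralSeries_nilpotencyClass
      have h2 := aux_prod G n
      rw [hbot, Subgroup.card_bot, mul_one, hk] at h2
      rw [hn]
      exact le_of_eq h2
  calc ∏ i ∈ Finset.Icc 2 (Group.nilpotencyClass G),
      Nat.card (TensorProduct ℤ
        (Additive (Abelianization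
          (((⊤ : Subgroup G).lowerCentralSeries (i - 1)) ⧸
            (((⊤ : Subgroup G).lowerCentralSeries i).subgroupOf ((⊤ : Subgroup G).lowerCentralSeries (i - 1)))))) N)
      ≤ ∏ i ∈ Finset.Icc 2 (Group.nilpotencyClass G),
        Nat.card (((⊤ : Subgroup G).lowerCentralSeries (i - 1)) ⧸
          (((⊤ : Subgroup G).lowerCentralSeries i).subgroupOf ((⊤ : Subgroup G).lowerCentralSeries (i - 1)))) ^ δ :=
      Finset.prod_le_prod (fun i _ => Nat.zero_le _) (fun i _ => hterm i)
    _ = (∏ i ∈ Finset.Icc 2 (Group.nilpotencyClass G),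
        Nat.card (((⊤ : Subgroup G).lowerCentralSeries (i - 1)) ⧸
          (((⊤ : Subgroup G).lowerCentralSeries i).subgroupOf ((⊤ : Subgroup G).lowerCentralSeries (i - 1))))) ^ δ :=
      Finset.prod_pow _ _ _
    _ ≤ (p ^ k) ^ δ := Nat.pow_le_pow_left hprod δ
    _ = p ^ (k * δ) := by rw [← pow_mul]
end

section
/- Let U and V be finite-dimensional vector spaces over a field F with dim U = n ≥ 3, and let A : U × U → V be an alternating bilinear map whose image spans V with dim V = m. Suppose there is a basis u₁, …, u_n of U such that A(u₁, u_i) for 2 ≤ i ≤ m+1 form a basis of V, A(u₁, u_j) = 0 for j ≥ m+2, A(u_i, u_j) = 0 for m+1 < i < j, and A(u_i, u_j) ∈ span{A(u₁, u_i)} whenever 2 ≤ i ≤ m+1 < j ≤ n. Then for the induced linear map Ψ : U ⊗ U ⊗ U → V ⊗ U given by Ψ(x ⊗ y ⊗ z) = A(x,y) ⊗ z + A(y,z) ⊗ x + A(z,x) ⊗ y, the elements Ψ(u₁ ⊗ u_i ⊗ u_c) for 2 ≤ i ≤ m+1 and i < c ≤ n are linearly independent in V ⊗ U. -/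
set_option maxHeartbeats 1000000


open TensorProduct

/-- Linear independence of `Ψ(u₁ ⊗ u_i ⊗ u_c)`, `2 ≤ i ≤ m+1 < c ≤ n` (1-based),
for an alternating map whose associated graph is a tree of height one.
Indices are 0-based here: `u ⟨0,_⟩` plays the role of `u₁`, and the 1-based range
`2 ≤ i ≤ m+1`, `i < c ≤ n` becomes `1 ≤ i ≤ m`, `i < c ≤ n-1`. -/
theorem stmt_18 {F U V : Type*} [Field F]
    [AddCommGroup U] [Module F U] [FiniteDimensional F U]
    [AddCommGroup V] [Module F V] [FiniteDimensional F V]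
    (n m : ℕ) (hn : 3 ≤ n) (hmn : m + 1 ≤ n) (hm : Module.finrank F V = m)
    (A : U →ₗ[F] U →ₗ[F] V) (hA : ∀ x : U, A x x = 0)
    (u : Module.Basis (Fin n) F U)
    (hspan : Submodule.span F (Set.range fun q : Fin n × Fin n => A (u q.1) (u q.2)) = ⊤)
    (hbasis_indep : LinearIndependent F
      (fun i : Fin m => A (u ⟨0, by omega⟩) (u ⟨i.val + 1, by omega⟩)))
    (hbasis_span : Submodule.span F
      (Set.range fun i : Fin m => A (u ⟨0, by omega⟩) (u ⟨i.val + 1, by omega⟩)) = ⊤)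
    (h2 : ∀ j : Fin n, m + 1 ≤ j.val → A (u ⟨0, by omega⟩) (u j) = 0)
    (h3 : ∀ i j : Fin n, m + 1 ≤ i.val → i < j → A (u i) (u j) = 0)
    (h4 : ∀ i j : Fin n, 1 ≤ i.val → i.val ≤ m → m + 1 ≤ j.val →
      A (u i) (u j) ∈ Submodule.span F {A (u ⟨0, by omega⟩) (u i)}) :
    LinearIndependent F
      (fun q : {q : Fin n × Fin n // 1 ≤ q.1.val ∧ q.1.val ≤ m ∧ q.1 < q.2} =>
        A (u ⟨0, by omega⟩) (u q.val.1) ⊗ₜ[F] u q.val.2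
          + A (u q.val.1) (u q.val.2) ⊗ₜ[F] u ⟨0, by omega⟩
          + A (u q.val.2) (u ⟨0, by omega⟩) ⊗ₜ[F] u q.val.1) := by
  classical
  have hskew : ∀ x y : U, A x y = -A y x := by
    intro x y
    have h := hA (x + y)
    simp only [map_add, LinearMap.add_apply, hA x, hA y, zero_add, add_zero] at h
    exact eq_neg_of_add_eq_zero_right h
  set u0 : Fin n := ⟨0, by omega⟩ with hu0
  let E : Module.Basis (Fin m) F V := Module.Basis.mk hbasis_indep (by rw [hbasis_span])
  have hE : ∀ k : Fin m, E k = A (u u0) (u ⟨k.val + 1, by omega⟩) :=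
    fun k => Module.Basis.mk_apply _ _ k
  have hE' : ∀ (k : Fin m) (i : Fin n), i.val = k.val + 1 → A (u u0) (u i) = E k := by
    intro k i hk
    rw [hE k]
    congr 2
    exact Fin.ext (by simp [hk])
  let B := Module.Basis.tensorProduct E u
  rw [Fintype.linearIndependent_iff]
  intro g hg q0
  obtain ⟨⟨i, c⟩, hq0⟩ := q0
  have hi1 : 1 ≤ i.val := hq0.1
  have him : i.val ≤ m := hq0.2.1
  have hic' : i.val < c.val := hq0.2.2
  set j : Fin m := ⟨i.val - 1, by omega⟩ with hj
  have key : ∀ q : {q : Fin n × Fin n // 1 ≤ q.1.val ∧ q.1.val ≤ m ∧ q.1 < q.2},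
      B.repr (A (u u0) (u q.val.1) ⊗ₜ[F] u q.val.2
          + A (u q.val.1) (u q.val.2) ⊗ₜ[F] u u0
          + A (u q.val.2) (u u0) ⊗ₜ[F] u q.val.1) (j, c)
        = if q = ⟨(i, c), hq0⟩ then 1 else 0 := by
    rintro ⟨⟨a, b⟩, hq⟩
    have ha1 : 1 ≤ a.val := hq.1
    have ham : a.val ≤ m := hq.2.1
    have hab' : a.val < b.val := hq.2.2
    simp only [map_add, Finsupp.add_apply]
    rw [Module.Basis.tensorProduct_repr_tmul_apply, Module.Basis.tensorProduct_repr_tmul_apply,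
      Module.Basis.tensorProduct_repr_tmul_apply]
    simp only [smul_eq_mul]
    have t2 : u.repr (u u0) c = 0 := by
      rw [Module.Basis.repr_self, Finsupp.single_apply]
      have : u0 ≠ c := by
        intro h; apply_fun Fin.val at h; simp only [hu0] at h; omega
      simp [this]
    have t1 : E.repr (A (u u0) (u a)) j = if a = i then 1 else 0 := by
      rw [hE' ⟨a.val - 1, by omega⟩ a (by simp; omega), Module.Basis.repr_self,
        Finsupp.single_apply]
      by_cases hai : a = i
      · subst hai; simp [hj]
      · have : (⟨a.val - 1, by omega⟩ : Fin m) ≠ j := by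
          intro h; apply_fun Fin.val at h; simp only [hj] at h
          exact hai (Fin.ext (by omega))
        simp [this, hai]
    have t3 : u.repr (u a) c * E.repr (A (u b) (u u0)) j = 0 := by
      by_cases hac : a = c
      · subst hac
        rw [hskew]
        by_cases hbm : m + 1 ≤ b.val
        · rw [h2 b hbm]; simp
        · rw [hE' ⟨b.val - 1, by omega⟩ b (by simp; omega), Module.Basis.repr_self]
          have : (⟨b.val - 1, by omega⟩ : Fin m) ≠ j := by
            intro h; apply_fun Fin.val at h; simp only [hj] at h; omega
          simp [Finsupp.single_apply, this]
      · rw [Module.Basis.repr_self]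
        simp [Finsupp.single_apply, hac]
    rw [t1, t2, t3, zero_mul, add_zero, add_zero, Module.Basis.repr_self,
      Finsupp.single_apply]
    by_cases hq' : a = i ∧ b = c
    · have : (⟨(a, b), hq⟩ :
          {q : Fin n × Fin n // 1 ≤ q.1.val ∧ q.1.val ≤ m ∧ q.1 < q.2})
          = ⟨(i, c), hq0⟩ := Subtype.ext (Prod.ext hq'.1 hq'.2)
      simp [hq'.1, hq'.2, this]
    · have hne : (⟨(a, b), hq⟩ :
          {q : Fin n × Fin n // 1 ≤ q.1.val ∧ q.1.val ≤ m ∧ q.1 < q.2})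
          ≠ ⟨(i, c), hq0⟩ := by
        intro h
        apply hq'
        have := congrArg Subtype.val h
        exact ⟨congrArg Prod.fst this, congrArg Prod.snd this⟩
      rcases Decidable.em (a = i) with hai | hai
      · have hbc : b ≠ c := fun h => hq' ⟨hai, h⟩
        simp [hai, hbc, hne]
      · simp [hai, hne]
  have h' := congrArg (fun v => B.repr v (j, c)) hg
  simp only [map_sum, map_smul, Finsupp.coe_finset_sum, Finset.sum_apply,
    Finsupp.smul_apply, map_zero, Finsupp.coe_zero, Pi.zero_apply] at h'
  rw [Finset.sum_congr rfl (fun q _ => by rw [key q])] at h'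
  simpa using h'
end
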